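/- Let k = 4. For every length ℓ ≥ 0 and every (i,j,r) ∈ W_3 (that is, integers i > j > r ≥ 0), ω^{(i,j,r)}_{4,ℓ} = a^{(i,j,r)}_{4,ℓ} − a^{(j,i,r)}_{4,ℓ} − a^{(r,j,i)}_{4,ℓ} − a^{(i,r,j)}_{4,ℓ} + a^{(j,r,i)}_{4,ℓ} + a^{(r,i,j)}_{4,ℓ}. -/
import Mathlib


open Finset

/-- Lattice points in `ℤ^(k-1)`; coordinate `i : Fin (k-1)` represents `ν_{i+1}`. -/
abbrev Pt (k : ℕ) := Fin (k - 1) → ℤ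

/-- The starting point `δ = (k-2, k-3, …, 1, 0)`. -/
def delta (k : ℕ) : Pt k := fun i => (k : ℤ) - 2 - (i : ℤ)

/-- Membership in `Q_{k-1}`: all coordinates nonnegative. -/
def inQ {k : ℕ} (v : Pt k) : Prop := ∀ i, 0 ≤ v i

/-- Membership in `W_{k-1}`: `ν_1 > ν_2 > ⋯ > ν_{k-1} ≥ 0`. -/
def inW {k : ℕ} (v : Pt k) : Prop := StrictAnti v ∧ ∀ i, 0 ≤ v i

/-- `eVec k i` is `e_i`: `e_0 = 0` and for `1 ≤ i ≤ k-1`, `e_i` is the `i`-th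
standard basis vector of `ℤ^(k-1)`. -/
def eVec (k : ℕ) (i : Fin k) : Pt k := fun j => if (j : ℕ) + 1 = (i : ℕ) then 1 else 0

/-- The vector `e_1`. -/
def eOne (k : ℕ) : Pt k := fun j => if (j : ℕ) = 0 then 1 else 0

/-- A step in `{+e_i : 0 ≤ i ≤ k-1}`. -/
def plusStep {k : ℕ} (d : Pt k) : Prop := ∃ i : Fin k, d = eVec k i

/-- A step in `{-e_i : 0 ≤ i ≤ k-1}`. -/
def minusStep {k : ℕ} (d : Pt k) : Prop := ∃ i : Fin k, d = -eVec k i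

/-- A `𝒫_D`-walk of length `ℓ`: starts at `δ`, stays in `D`, odd steps are `-e_i`,
even steps are `+e_i`. -/
def IsPWalk {k : ℕ} (D : Pt k → Prop) (ℓ : ℕ) (v : Fin (ℓ + 1) → Pt k) : Prop :=
  v ⟨0, Nat.succ_pos ℓ⟩ = delta k ∧ (∀ t, D (v t)) ∧
    ∀ t : ℕ, ∀ h : t + 1 < ℓ + 1,
      (Odd (t + 1) → minusStep (v ⟨t + 1, h⟩ - v ⟨t, by omega⟩)) ∧
      (Even (t + 1) → plusStep (v ⟨t + 1, h⟩ - v ⟨t, by omega⟩))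

/-- A `ℬ_D`-walk of length `ℓ`: starts at `δ`, stays in `D`, odd steps are `+e_i`,
even steps are `-e_i`. -/
def IsBWalk {k : ℕ} (D : Pt k → Prop) (ℓ : ℕ) (v : Fin (ℓ + 1) → Pt k) : Prop :=
  v ⟨0, Nat.succ_pos ℓ⟩ = delta k ∧ (∀ t, D (v t)) ∧
    ∀ t : ℕ, ∀ h : t + 1 < ℓ + 1,
      (Odd (t + 1) → plusStep (v ⟨t + 1, h⟩ - v ⟨t, by omega⟩)) ∧
      (Even (t + 1) → minusStep (v ⟨t + 1, h⟩ - v ⟨t, by omega⟩))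

/-- A walk is loop-free if no odd/even step pair `(+e_1, -e_1)` occurs. -/
def LoopFree {k ℓ : ℕ} (v : Fin (ℓ + 1) → Pt k) : Prop :=
  ∀ q : ℕ, 1 ≤ q → ∀ h : 2 * q < ℓ + 1,
    ¬ (v ⟨2 * q - 1, by omega⟩ - v ⟨2 * q - 2, by omega⟩ = eOne k ∧
       v ⟨2 * q, h⟩ - v ⟨2 * q - 1, by omega⟩ = -eOne k)

/-- `a^ν_{k,ℓ}`: the number of `𝒫_{Q_{k-1}}`-walks of length `ℓ` ending at `ν`. -/
noncomputable def aCount (k ℓ : ℕ) (ν : Pt k) : ℕ :=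
  Nat.card {v : Fin (ℓ + 1) → Pt k //
    IsPWalk (inQ (k := k)) ℓ v ∧ v (Fin.last ℓ) = ν}

/-- `ω^ν_{k,ℓ}`: the number of `𝒫_{W_{k-1}}`-walks of length `ℓ` ending at `ν`. -/
noncomputable def omegaCount (k ℓ : ℕ) (ν : Pt k) : ℕ :=
  Nat.card {v : Fin (ℓ + 1) → Pt k //
    IsPWalk (inW (k := k)) ℓ v ∧ v (Fin.last ℓ) = ν}

/-- `σ^ν_{k,ℓ}`: the number of `ℬ_{W_{k-1}}`-walks of length `ℓ` ending at `ν`. -/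
noncomputable def sigmaCount (k ℓ : ℕ) (ν : Pt k) : ℕ :=
  Nat.card {v : Fin (ℓ + 1) → Pt k //
    IsBWalk (inW (k := k)) ℓ v ∧ v (Fin.last ℓ) = ν}

/-- `σ^{ν;*}_{k,ℓ}`: the number of loop-free `ℬ_{W_{k-1}}`-walks of length `ℓ`
ending at `ν`. -/
noncomputable def sigmaStarCount (k ℓ : ℕ) (ν : Pt k) : ℕ :=
  Nat.card {v : Fin (ℓ + 1) → Pt k //
    IsBWalk (inW (k := k)) ℓ v ∧ LoopFree v ∧ v (Fin.last ℓ) = ν}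

/-- `(a,b)` is an arc of the standard representation of the partition `P`:
`a < b`, `a` and `b` lie in a common block `B`, and no element of `B` lies
strictly between them. -/
def IsArc {N : ℕ} (P : Finpartition (Finset.univ : Finset (Fin N))) (a b : Fin N) : Prop :=
  a < b ∧ ∃ B ∈ P.parts, a ∈ B ∧ b ∈ B ∧ ∀ c ∈ B, ¬(a < c ∧ c < b)

/-- The partition `P` has a `k`-crossing: arcs `(i₁,j₁),…,(i_k,j_k)` with
`i₁ < ⋯ < i_k < j₁ < ⋯ < j_k`. -/
def PartitionHasKCrossing {N : ℕ} (k : ℕ)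
    (P : Finpartition (Finset.univ : Finset (Fin N))) : Prop :=
  ∃ ii jj : Fin k → Fin N, (∀ m, IsArc P (ii m) (jj m)) ∧
    StrictMono ii ∧ StrictMono jj ∧ ∀ m m', ii m < jj m'

/-- The partition `P` is `2`-regular: distinct elements of a common block differ
by at least `2`. -/
def TwoRegular {N : ℕ} (P : Finpartition (Finset.univ : Finset (Fin N))) : Prop :=
  ∀ B ∈ P.parts, ∀ x ∈ B, ∀ y ∈ B, x ≠ y → 2 ≤ |((x : ℕ) : ℤ) - ((y : ℕ) : ℤ)|

/-- A braid over `[N]`, given by its arc set: arcs `(i,j)` with `i ≤ j` (loops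
allowed), each vertex is the smaller endpoint of at most one arc and the larger
endpoint of at most one arc. -/
def IsBraid {N : ℕ} (A : Finset (Fin N × Fin N)) : Prop :=
  (∀ p ∈ A, p.1 ≤ p.2) ∧ (∀ p ∈ A, ∀ q ∈ A, p.1 = q.1 → p = q) ∧
    (∀ p ∈ A, ∀ q ∈ A, p.2 = q.2 → p = q)

/-- The braid with arc set `A` has a `k`-crossing: arcs `(i₁,j₁),…,(i_k,j_k)`
with `i₁ < ⋯ < i_k ≤ j₁ < ⋯ < j_k`. -/
def BraidHasKCrossing {N : ℕ} (k : ℕ) (A : Finset (Fin N × Fin N)) : Prop :=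
  ∃ ii jj : Fin k → Fin N, (∀ m, (ii m, jj m) ∈ A) ∧
    StrictMono ii ∧ StrictMono jj ∧ ∀ m m', ii m ≤ jj m'

/-- A braid is loop-free if it has no arc `(i,i)`. -/
def BraidLoopFree {N : ℕ} (A : Finset (Fin N × Fin N)) : Prop :=
  ∀ p ∈ A, p.1 ≠ p.2

namespace OmegaProof

attribute [local instance 0] Classical.propDecidable

abbrev V : Type := Fin 3 → ℤ

abbrev inQ4 : Pt 4 → Prop := inQ (k := 4)
abbrev inW4 : Pt 4 → Prop := inW (k := 4)

def OnWall (x : V) : Prop := x 0 = x 1 ∨ x 1 = x 2 ∨ x 0 = x 2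

instance : DecidablePred OnWall := fun x => by unfold OnWall; infer_instance

def Touches {ℓ : ℕ} (v : Fin (ℓ + 1) → V) : Prop := ∃ t, OnWall (v t)

variable {ℓ : ℕ}

lemma ft_ex {v : Fin (ℓ + 1) → V} (hv : Touches v) :
    ∃ n, ∃ h : n < ℓ + 1, OnWall (v ⟨n, h⟩) := by
  obtain ⟨⟨t, ht⟩, hw⟩ := hv; exact ⟨t, ht, hw⟩

noncomputable def ft (v : Fin (ℓ + 1) → V) (hv : Touches v) : ℕ := Nat.find (ft_ex hv)

lemma ft_lt {v : Fin (ℓ + 1) → V} (hv : Touches v) : ft v hv < ℓ + 1 :=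
  (Nat.find_spec (ft_ex hv)).choose

noncomputable def fpt (v : Fin (ℓ + 1) → V) (hv : Touches v) : V := v ⟨ft v hv, ft_lt hv⟩

lemma ft_wall {v : Fin (ℓ + 1) → V} (hv : Touches v) : OnWall (fpt v hv) :=
  (Nat.find_spec (ft_ex hv)).choose_spec

lemma ft_min {v : Fin (ℓ + 1) → V} (hv : Touches v) {n : ℕ} (h : n < ℓ + 1)
    (hn : n < ft v hv) : ¬ OnWall (v ⟨n, h⟩) :=
  fun hw => Nat.find_min (ft_ex hv) hn ⟨h, hw⟩

lemma ft_eq {v : Fin (ℓ + 1) → V} (hv : Touches v) {n : ℕ} (h : n < ℓ + 1)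
    (hw : OnWall (v ⟨n, h⟩))
    (hmin : ∀ m (hm : m < ℓ + 1), m < n → ¬ OnWall (v ⟨m, hm⟩)) : ft v hv = n := by
  have h1 : ft v hv ≤ n := Nat.find_le ⟨h, hw⟩
  rcases lt_or_eq_of_le h1 with h2 | h2
  · exact absurd (ft_wall hv) (hmin _ (ft_lt hv) h2)
  · exact h2

lemma not_onWall_delta : ¬ OnWall (delta 4) := by decide

/-- canonical wall data -/
def wa (x : V) : Fin 3 := if x 0 = x 1 then 0 else if x 1 = x 2 then 1 else 0
def wb (x : V) : Fin 3 := if x 0 = x 1 then 1 else if x 1 = x 2 then 2 else 2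
def wc (x : V) : ℕ := if x 0 = x 1 then 0 else if x 1 = x 2 then 1 else 2

def swc : ℕ → Equiv.Perm (Fin 3)
  | 0 => Equiv.swap 0 1
  | 1 => Equiv.swap 1 2
  | _ => Equiv.swap 0 2

lemma wall_fix {x : V} (hx : OnWall x) : x (wa x) = x (wb x) := by
  unfold wa wb
  split_ifs with hh1 hh2
  · exact hh1
  · exact hh2
  · rcases hx with h | h | h
    · exact absurd h hh1
    · exact absurd h hh2
    · exact h

lemma swap_wab (x : V) : Equiv.swap (wa x) (wb x) = swc (wc x) := by
  unfold wa wb wc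
  split_ifs <;> rfl

lemma wc_cases (x : V) : wc x = 0 ∨ wc x = 1 ∨ wc x = 2 := by
  unfold wc; split_ifs <;> simp

lemma comp_swap_eq {x : V} {a b : Fin 3} (h : x a = x b) :
    x ∘ ⇑(Equiv.swap a b) = x := by
  funext j
  rcases eq_or_ne j a with rfl | hja
  · simpa [Equiv.swap_apply_left] using h.symm
  rcases eq_or_ne j b with rfl | hjb
  · simpa [Equiv.swap_apply_right] using h
  · simp [Function.comp, Equiv.swap_apply_of_ne_of_ne hja hjb]

lemma swap_comp_comp (f : V) (a b : Fin 3) :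
    (f ∘ ⇑(Equiv.swap a b)) ∘ ⇑(Equiv.swap a b) = f := by
  funext j; simp [Function.comp, Equiv.swap_apply_self]

lemma swc_swc (f : V) (c : ℕ) : (f ∘ ⇑(swc c)) ∘ ⇑(swc c) = f := by
  rcases c with _ | _ | c <;> exact swap_comp_comp f _ _

lemma plusStep_comp {d : V} (π : Equiv.Perm (Fin 3)) (h : plusStep (k := 4) d) :
    plusStep (k := 4) (d ∘ ⇑π) := by
  obtain ⟨m, rfl⟩ := h
  have key : ∀ (π : Equiv.Perm (Fin 3)) (m : Fin 4), ∃ m', (eVec 4 m) ∘ ⇑π = eVec 4 m' := by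
    decide
  exact key π m

lemma minusStep_comp {d : V} (π : Equiv.Perm (Fin 3)) (h : minusStep (k := 4) d) :
    minusStep (k := 4) (d ∘ ⇑π) := by
  obtain ⟨m, rfl⟩ := h
  obtain ⟨m', hm'⟩ := plusStep_comp π ⟨m, rfl⟩
  exact ⟨m', by rw [show (-eVec 4 m) ∘ ⇑π = -((eVec 4 m) ∘ ⇑π) from rfl, hm']⟩

lemma inQ_comp {x : V} (π : Equiv.Perm (Fin 3)) (h : inQ4 x) : inQ4 (x ∘ ⇑π) :=
  fun i => h (π i)

noncomputable def refl (v : Fin (ℓ + 1) → V) (hv : Touches v) : Fin (ℓ + 1) → V :=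
  fun s => if (s : ℕ) < ft v hv then v s
    else v s ∘ ⇑(Equiv.swap (wa (fpt v hv)) (wb (fpt v hv)))

lemma refl_lt {v : Fin (ℓ + 1) → V} (hv : Touches v) (s : Fin (ℓ + 1))
    (hs : (s : ℕ) < ft v hv) : refl v hv s = v s := if_pos hs

lemma refl_ge {v : Fin (ℓ + 1) → V} (hv : Touches v) (s : Fin (ℓ + 1))
    (hs : ¬ (s : ℕ) < ft v hv) :
    refl v hv s = v s ∘ ⇑(Equiv.swap (wa (fpt v hv)) (wb (fpt v hv))) := if_neg hs

lemma refl_le {v : Fin (ℓ + 1) → V} (hv : Touches v) (s : Fin (ℓ + 1))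
    (hs : (s : ℕ) ≤ ft v hv) : refl v hv s = v s := by
  rcases lt_or_eq_of_le hs with h | h
  · exact refl_lt hv s h
  · have hs' : s = (⟨ft v hv, ft_lt hv⟩ : Fin (ℓ + 1)) := Fin.ext h
    rw [refl_ge hv s (by omega), hs']
    exact comp_swap_eq (wall_fix (ft_wall hv))

lemma refl_at_ft {v : Fin (ℓ + 1) → V} (hv : Touches v) :
    refl v hv ⟨ft v hv, ft_lt hv⟩ = fpt v hv :=
  refl_le hv _ le_rfl

lemma refl_end {v : Fin (ℓ + 1) → V} (hv : Touches v) :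
    refl v hv (Fin.last ℓ) = v (Fin.last ℓ) ∘
      ⇑(Equiv.swap (wa (fpt v hv)) (wb (fpt v hv))) := by
  refine refl_ge hv _ ?_
  have := ft_lt hv
  simp only [Fin.last]
  omega

lemma refl_touch {v : Fin (ℓ + 1) → V} (hv : Touches v) : Touches (refl v hv) :=
  ⟨⟨ft v hv, ft_lt hv⟩, by rw [refl_at_ft hv]; exact ft_wall hv⟩

lemma ft_refl {v : Fin (ℓ + 1) → V} (hv : Touches v) (hv' : Touches (refl v hv)) :
    ft (refl v hv) hv' = ft v hv := by
  refine ft_eq hv' (ft_lt hv) ?_ ?_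
  · rw [refl_at_ft hv]; exact ft_wall hv
  · intro m hm hmlt
    rw [refl_lt hv _ hmlt]
    exact ft_min hv hm hmlt

lemma refl_fpt {v : Fin (ℓ + 1) → V} (hv : Touches v) (hv' : Touches (refl v hv)) :
    fpt (refl v hv) hv' = fpt v hv := by
  unfold fpt
  have h : (⟨ft (refl v hv) hv', ft_lt hv'⟩ : Fin (ℓ + 1)) = ⟨ft v hv, ft_lt hv⟩ :=
    Fin.ext (ft_refl hv hv')
  rw [h, refl_at_ft hv]; rfl

lemma refl_refl {v : Fin (ℓ + 1) → V} (hv : Touches v) (hv' : Touches (refl v hv)) :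
    refl (refl v hv) hv' = v := by
  funext s
  by_cases hs : (s : ℕ) < ft (refl v hv) hv'
  · rw [refl_lt hv' s hs]
    rw [ft_refl hv hv'] at hs
    exact refl_lt hv s hs
  · rw [refl_ge hv' s hs, refl_fpt hv hv']
    rw [ft_refl hv hv'] at hs
    rw [refl_ge hv s hs]
    exact swap_comp_comp _ _ _

lemma walk_step {D : Pt 4 → Prop} {v : Fin (ℓ + 1) → Pt 4} (hw : IsPWalk D ℓ v)
    (t : ℕ) (h : t + 1 < ℓ + 1) :
    plusStep (v ⟨t + 1, h⟩ - v ⟨t, by omega⟩) ∨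
      minusStep (v ⟨t + 1, h⟩ - v ⟨t, by omega⟩) := by
  rcases Nat.even_or_odd (t + 1) with he | ho
  · exact Or.inl ((hw.2.2 t h).2 he)
  · exact Or.inr ((hw.2.2 t h).1 ho)

lemma ft_pos {v : Fin (ℓ + 1) → Pt 4} (hw : IsPWalk inQ4 ℓ v) (hv : Touches v) :
    0 < ft v hv := by
  rcases Nat.eq_zero_or_pos (ft v hv) with h | h
  · exfalso
    have hwall := ft_wall hv
    unfold fpt at hwall
    have he : (⟨ft v hv, ft_lt hv⟩ : Fin (ℓ + 1)) = ⟨0, Nat.succ_pos ℓ⟩ := Fin.ext h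
    rw [he, hw.1] at hwall
    exact not_onWall_delta hwall
  · exact h

lemma refl_walk {v : Fin (ℓ + 1) → Pt 4} (hw : IsPWalk inQ4 ℓ v) (hv : Touches v) :
    IsPWalk inQ4 ℓ (refl v hv) := by
  have hpos := ft_pos hw hv
  refine ⟨?_, ?_, ?_⟩
  · rw [refl_lt hv _ (by simpa using hpos)]
    exact hw.1
  · intro t
    by_cases ht : (t : ℕ) < ft v hv
    · rw [refl_lt hv t ht]; exact hw.2.1 t
    · rw [refl_ge hv t ht]; exact inQ_comp _ (hw.2.1 t)
  · intro t h
    have key : ∃ π : Equiv.Perm (Fin 3),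
        refl v hv ⟨t + 1, h⟩ - refl v hv ⟨t, by omega⟩ =
          (v ⟨t + 1, h⟩ - v ⟨t, by omega⟩) ∘ ⇑π := by
      rcases le_or_gt (t + 1) (ft v hv) with hle | hgt
      · refine ⟨1, ?_⟩
        rw [refl_le hv _ (by simpa using hle), refl_le hv _ (by simp; omega)]
        rfl
      · refine ⟨Equiv.swap (wa (fpt v hv)) (wb (fpt v hv)), ?_⟩
        rw [refl_ge hv _ (by simp; omega), refl_ge hv _ (by simp; omega)]
        rfl
    obtain ⟨π, hπ⟩ := key
    constructor
    · intro hodd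
      rw [hπ]
      exact minusStep_comp π ((hw.2.2 t h).1 hodd)
    · intro heven
      rw [hπ]
      exact plusStep_comp π ((hw.2.2 t h).2 heven)

lemma eVec_vals (m : Fin 4) (c : Fin 3) : eVec 4 m c = 0 ∨ eVec 4 m c = 1 := by
  unfold eVec; split_ifs <;> simp

lemma eVec_pair (m : Fin 4) {p q : Fin 3} (h : p ≠ q) :
    eVec 4 m p = 0 ∨ eVec 4 m q = 0 := by
  unfold eVec
  split_ifs with h1 h2
  · exact absurd (Fin.ext (by omega)) h
  · right; rfl
  · left; rfl
  · left; rfl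

lemma step_abs {d : V} (hd : plusStep (k := 4) d ∨ minusStep (k := 4) d) (c : Fin 3) :
    |d c| ≤ 1 := by
  have key : ∀ m : Fin 4, |eVec 4 m c| ≤ 1 := by
    intro m; rcases eVec_vals m c with h | h <;> rw [h] <;> norm_num
  rcases hd with ⟨m, rfl⟩ | ⟨m, rfl⟩
  · exact key m
  · rw [show (-eVec 4 m) c = -(eVec 4 m c) from rfl, abs_neg]; exact key m

lemma step_abs_pair {d : V} (hd : plusStep (k := 4) d ∨ minusStep (k := 4) d)
    {p q : Fin 3} (h : p ≠ q) : |d p| + |d q| ≤ 1 := by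
  have key : ∀ m : Fin 4, |eVec 4 m p| + |eVec 4 m q| ≤ 1 := by
    intro m
    rcases eVec_pair m h with h0 | h0 <;>
      rcases eVec_vals m p with h1 | h1 <;>
      rcases eVec_vals m q with h2 | h2 <;>
      simp_all <;> omega
  rcases hd with ⟨m, rfl⟩ | ⟨m, rfl⟩
  · exact key m
  · rw [show (-eVec 4 m) p = -(eVec 4 m p) from rfl,
        show (-eVec 4 m) q = -(eVec 4 m q) from rfl, abs_neg, abs_neg]
    exact key m

lemma delta_range (c : Fin 3) : 0 ≤ delta 4 c ∧ delta 4 c ≤ 2 := by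
  fin_cases c <;> simp [delta] <;> norm_num

lemma walk_abs {D : Pt 4 → Prop} {v : Fin (ℓ + 1) → Pt 4} (hw : IsPWalk D ℓ v) :
    ∀ n, ∀ h : n < ℓ + 1, ∀ c : Fin 3, |v ⟨n, h⟩ c - delta 4 c| ≤ n := by
  intro n
  induction n with
  | zero =>
    intro h c
    rw [show (⟨0, h⟩ : Fin (ℓ + 1)) = ⟨0, Nat.succ_pos ℓ⟩ from rfl, hw.1]
    simp
  | succ n ih =>
    intro h c
    have hn : n < ℓ + 1 := by omega
    have hd := walk_step hw n h
    have habs : |(v ⟨n + 1, h⟩ - v ⟨n, hn⟩) c| ≤ 1 := step_abs hd c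
    have hsub : (v ⟨n + 1, h⟩ - v ⟨n, hn⟩) c = v ⟨n + 1, h⟩ c - v ⟨n, hn⟩ c := rfl
    rw [hsub] at habs
    have h1 : v ⟨n + 1, h⟩ c - delta 4 c =
        (v ⟨n + 1, h⟩ c - v ⟨n, hn⟩ c) + (v ⟨n, hn⟩ c - delta 4 c) := by ring
    rw [h1]
    calc |(v ⟨n + 1, h⟩ c - v ⟨n, hn⟩ c) + (v ⟨n, hn⟩ c - delta 4 c)|
        ≤ |v ⟨n + 1, h⟩ c - v ⟨n, hn⟩ c| + |v ⟨n, hn⟩ c - delta 4 c| := abs_add_le _ _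
      _ ≤ 1 + n := add_le_add habs (ih hn c)
      _ = ((n : ℤ) + 1) := by ring
      _ = ((n + 1 : ℕ) : ℤ) := by push_cast; ring

lemma walk_coord_bound {D : Pt 4 → Prop} {v : Fin (ℓ + 1) → Pt 4} (hw : IsPWalk D ℓ v)
    (t : Fin (ℓ + 1)) (c : Fin 3) : v t c ∈ Set.Icc (-(ℓ : ℤ)) ((ℓ : ℤ) + 2) := by
  have h1 := walk_abs hw t.1 t.2 c
  have h2 := delta_range c
  have h3 : ((t : ℕ) : ℤ) ≤ (ℓ : ℤ) := by
    have := t.2; omega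
  rw [show (⟨t.1, t.2⟩ : Fin (ℓ + 1)) = t from rfl] at h1
  rw [abs_le] at h1
  constructor <;> omega

lemma finite_walks (D : Pt 4 → Prop) (μ : Pt 4) :
    Finite {v : Fin (ℓ + 1) → Pt 4 // IsPWalk D ℓ v ∧ v (Fin.last ℓ) = μ} := by
  haveI : Finite (Set.Icc (-(ℓ : ℤ)) ((ℓ : ℤ) + 2)) :=
    (Set.finite_Icc _ _).to_subtype
  refine Finite.of_injective
    (fun x => (fun (t : Fin (ℓ + 1)) (c : Fin 3) =>
      (⟨x.1 t c, walk_coord_bound x.2.1 t c⟩ : Set.Icc (-(ℓ : ℤ)) ((ℓ : ℤ) + 2)))) ?_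
  intro x y hxy
  apply Subtype.ext
  funext t c
  simpa using congrFun (congrFun hxy t) c

lemma sep {x y x' y' : ℤ} (h : y < x) (hne : x' ≠ y') (hb : |x' - x| + |y' - y| ≤ 1) :
    y' < x' := by
  rcases abs_cases (x' - x) with ⟨e1, e2⟩ | ⟨e1, e2⟩ <;>
    rcases abs_cases (y' - y) with ⟨f1, f2⟩ | ⟨f1, f2⟩ <;>
    rcases lt_or_gt_of_ne hne with hne' | hne' <;> omega

lemma strictAnti_of_pairs {x : V} (h0 : x 1 < x 0) (h1 : x 2 < x 1) : StrictAnti x := by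
  intro a b hab
  have key : (a = 0 ∧ b = 1) ∨ (a = 0 ∧ b = 2) ∨ (a = 1 ∧ b = 2) := by
    revert hab; revert a b; decide
  rcases key with ⟨rfl, rfl⟩ | ⟨rfl, rfl⟩ | ⟨rfl, rfl⟩
  · exact h0
  · exact h1.trans h0
  · exact h1

lemma inW_pairs {x : V} (h : inW (k := 4) x) : x 1 < x 0 ∧ x 2 < x 1 :=
  ⟨h.1 (show (0 : Fin 3) < 1 by decide), h.1 (show (1 : Fin 3) < 2 by decide)⟩

lemma avoid_isW {v : Fin (ℓ + 1) → Pt 4} (hw : IsPWalk inQ4 ℓ v) (hnt : ¬ Touches v) :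
    IsPWalk inW4 ℓ v := by
  obtain ⟨h0, hQ, hstep⟩ := hw
  have hnw : ∀ t : Fin (ℓ + 1), ¬ OnWall (v t) := by
    intro t hwall; exact hnt ⟨t, hwall⟩
  have key : ∀ n, ∀ h : n < ℓ + 1, v ⟨n, h⟩ 1 < v ⟨n, h⟩ 0 ∧ v ⟨n, h⟩ 2 < v ⟨n, h⟩ 1 := by
    intro n
    induction n with
    | zero =>
      intro h
      rw [show (⟨0, h⟩ : Fin (ℓ + 1)) = ⟨0, Nat.succ_pos ℓ⟩ from rfl, h0]
      constructor <;> decide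
    | succ n ih =>
      intro h
      have hn : n < ℓ + 1 := by omega
      obtain ⟨ih1, ih2⟩ := ih hn
      have hd := walk_step ⟨h0, hQ, hstep⟩ n h
      have hwall := hnw ⟨n + 1, h⟩
      unfold OnWall at hwall
      push_neg at hwall
      obtain ⟨hne1, hne2, _⟩ := hwall
      have e01 : |(v ⟨n + 1, h⟩ - v ⟨n, hn⟩) 0| + |(v ⟨n + 1, h⟩ - v ⟨n, hn⟩) 1| ≤ 1 :=
        step_abs_pair hd (by decide)
      have e12 : |(v ⟨n + 1, h⟩ - v ⟨n, hn⟩) 1| + |(v ⟨n + 1, h⟩ - v ⟨n, hn⟩) 2| ≤ 1 :=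
        step_abs_pair hd (by decide)
      constructor
      · exact sep ih1 hne1 e01
      · exact sep ih2 hne2 e12
  refine ⟨h0, ?_, hstep⟩
  intro t
  obtain ⟨k1, k2⟩ := key t.1 t.2
  rw [show (⟨t.1, t.2⟩ : Fin (ℓ + 1)) = t from rfl] at k1 k2
  exact ⟨strictAnti_of_pairs k1 k2, hQ t⟩

lemma isW_avoid {v : Fin (ℓ + 1) → Pt 4} (hw : IsPWalk inW4 ℓ v) :
    IsPWalk inQ4 ℓ v ∧ ¬ Touches v := by
  refine ⟨⟨hw.1, fun t => (hw.2.1 t).2, hw.2.2⟩, ?_⟩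
  rintro ⟨t, hwall⟩
  obtain ⟨p1, p2⟩ := inW_pairs (hw.2.1 t)
  rcases hwall with h | h | h
  · omega
  · omega
  · have := p1.trans' p2; omega

noncomputable def wcOf (v : Fin (ℓ + 1) → V) : ℕ :=
  if hv : Touches v then wc (fpt v hv) else 0

lemma wcOf_touch {v : Fin (ℓ + 1) → V} (hv : Touches v) : wcOf v = wc (fpt v hv) :=
  dif_pos hv

lemma wcOf_refl {v : Fin (ℓ + 1) → V} (hv : Touches v) : wcOf (refl v hv) = wcOf v := by
  rw [wcOf_touch (refl_touch hv), wcOf_touch hv, refl_fpt hv (refl_touch hv)]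

lemma wcOf_cases (v : Fin (ℓ + 1) → V) : wcOf v = 0 ∨ wcOf v = 1 ∨ wcOf v = 2 := by
  unfold wcOf
  split_ifs with h
  · exact wc_cases _
  · left; rfl

abbrev WQ (ℓ : ℕ) (μ : Pt 4) :=
  {v : Fin (ℓ + 1) → Pt 4 // IsPWalk inQ4 ℓ v ∧ v (Fin.last ℓ) = μ}

abbrev WW (ℓ : ℕ) (μ : Pt 4) :=
  {v : Fin (ℓ + 1) → Pt 4 // IsPWalk inW4 ℓ v ∧ v (Fin.last ℓ) = μ}

abbrev WT (ℓ : ℕ) (μ : Pt 4) :=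
  {v : Fin (ℓ + 1) → Pt 4 // (IsPWalk inQ4 ℓ v ∧ v (Fin.last ℓ) = μ) ∧ Touches v}

abbrev WA (ℓ : ℕ) (μ : Pt 4) :=
  {v : Fin (ℓ + 1) → Pt 4 // (IsPWalk inQ4 ℓ v ∧ v (Fin.last ℓ) = μ) ∧ ¬ Touches v}

abbrev WTc (ℓ : ℕ) (μ : Pt 4) (c : ℕ) :=
  {v : Fin (ℓ + 1) → Pt 4 //
    ((IsPWalk inQ4 ℓ v ∧ v (Fin.last ℓ) = μ) ∧ Touches v) ∧ wcOf v = c}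

noncomputable def splitP {α : Type*} (p q : α → Prop) :
    {a : α // p a} ≃ {a : α // p a ∧ q a} ⊕ {a : α // p a ∧ ¬ q a} where
  toFun x := if h : q x.1 then Sum.inl ⟨x.1, x.2, h⟩ else Sum.inr ⟨x.1, x.2, h⟩
  invFun y := Sum.elim (fun a => ⟨a.1, a.2.1⟩) (fun a => ⟨a.1, a.2.1⟩) y
  left_inv x := by by_cases h : q x.1 <;> simp [h]
  right_inv y := by
    rcases y with a | a
    · simp [a.2.2]
    · simp [a.2.2]

lemma reflMap_end {v : Fin (ℓ + 1) → V} (hv : Touches v) {μ : Pt 4}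
    (hend : v (Fin.last ℓ) = μ) {c : ℕ} (hc : wcOf v = c) :
    refl v hv (Fin.last ℓ) = μ ∘ ⇑(swc c) := by
  rw [refl_end hv, swap_wab, ← wcOf_touch hv, hc, hend]

noncomputable def reflMap (c : ℕ) (μ μ' : Pt 4) (hμ : μ ∘ ⇑(swc c) = μ')
    (x : WTc ℓ μ c) : WTc ℓ μ' c :=
  ⟨refl x.1 x.2.1.2,
    ⟨⟨refl_walk x.2.1.1.1 x.2.1.2, by rw [reflMap_end x.2.1.2 x.2.1.1.2 x.2.2, hμ]⟩,
      refl_touch x.2.1.2⟩,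
    by rw [wcOf_refl x.2.1.2]; exact x.2.2⟩

noncomputable def reflEquiv (c : ℕ) (μ μ' : Pt 4) (hμ : μ ∘ ⇑(swc c) = μ') :
    WTc ℓ μ c ≃ WTc ℓ μ' c where
  toFun := reflMap c μ μ' hμ
  invFun := reflMap c μ' μ (by rw [← hμ, swc_swc])
  left_inv x := Subtype.ext (refl_refl x.2.1.2 _)
  right_inv x := Subtype.ext (refl_refl x.2.1.2 _)

noncomputable def avoidEquiv (μ : Pt 4) : WA ℓ μ ≃ WW ℓ μ where
  toFun x := ⟨x.1, avoid_isW x.2.1.1 x.2.2, x.2.1.2⟩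
  invFun y := ⟨y.1, ⟨(isW_avoid y.2.1).1, y.2.2⟩, (isW_avoid y.2.1).2⟩
  left_inv x := rfl
  right_inv y := rfl

lemma wa_isEmpty {μ : Pt 4} (hbad : ¬ (μ 1 < μ 0 ∧ μ 2 < μ 1)) : IsEmpty (WA ℓ μ) := by
  constructor
  intro x
  have hW := avoid_isW x.2.1.1 x.2.2
  have := inW_pairs (hW.2.1 (Fin.last ℓ))
  rw [x.2.1.2] at this
  exact hbad this

lemma finite_sub {α : Type*} (p q : α → Prop) [Finite {a : α // p a}] :
    Finite {a : α // p a ∧ q a} :=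
  Finite.of_injective (fun x : {a : α // p a ∧ q a} => (⟨x.1, x.2.1⟩ : {a : α // p a}))
    (by intro a b h; have h2 := congrArg Subtype.val h; exact Subtype.ext h2)

lemma comp_swc0 (p q s : ℤ) : (![p, q, s] : Pt 4) ∘ ⇑(swc 0) = ![q, p, s] := by
  funext x; fin_cases x <;> simp [swc, Equiv.swap_apply_def]

lemma comp_swc1 (p q s : ℤ) : (![p, q, s] : Pt 4) ∘ ⇑(swc 1) = ![p, s, q] := by
  funext x; fin_cases x <;> simp [swc, Equiv.swap_apply_def]

lemma comp_swc2 (p q s : ℤ) : (![p, q, s] : Pt 4) ∘ ⇑(swc 2) = ![s, q, p] := by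
  funext x; fin_cases x <;> simp [swc, Equiv.swap_apply_def]

lemma card_split (μ : Pt 4) :
    aCount 4 ℓ μ = Nat.card (WTc ℓ μ 0) + Nat.card (WTc ℓ μ 1) + Nat.card (WTc ℓ μ 2)
      + Nat.card (WA ℓ μ) := by
  set p : (Fin (ℓ + 1) → Pt 4) → Prop :=
    fun v => IsPWalk inQ4 ℓ v ∧ v (Fin.last ℓ) = μ with hp
  haveI F0 : Finite {v // p v} := finite_walks _ _
  haveI F1 : Finite {v // p v ∧ Touches v} := finite_sub _ _
  haveI F2 : Finite {v // p v ∧ ¬ Touches v} := finite_sub _ _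
  haveI F3 : Finite {v // (p v ∧ Touches v) ∧ wcOf v = 0} := finite_sub _ _
  haveI F4 : Finite {v // (p v ∧ Touches v) ∧ ¬ wcOf v = 0} := finite_sub _ _
  haveI F5 : Finite {v // ((p v ∧ Touches v) ∧ ¬ wcOf v = 0) ∧ wcOf v = 1} := finite_sub _ _
  haveI F6 : Finite {v // ((p v ∧ Touches v) ∧ ¬ wcOf v = 0) ∧ ¬ wcOf v = 1} := finite_sub _ _
  have h1 : aCount 4 ℓ μ = Nat.card {v // p v} := rfl
  have h2 : Nat.card {v // p v} =
      Nat.card {v // p v ∧ Touches v} + Nat.card {v // p v ∧ ¬ Touches v} := by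
    rw [Nat.card_congr (splitP p (fun v => Touches v)), Nat.card_sum]
  have h3 : Nat.card {v // p v ∧ Touches v} =
      Nat.card {v // (p v ∧ Touches v) ∧ wcOf v = 0} +
        Nat.card {v // (p v ∧ Touches v) ∧ ¬ wcOf v = 0} := by
    rw [Nat.card_congr (splitP (fun v => p v ∧ Touches v) (fun v => wcOf v = 0)),
      Nat.card_sum]
  have h4 : Nat.card {v // (p v ∧ Touches v) ∧ ¬ wcOf v = 0} =
      Nat.card {v // ((p v ∧ Touches v) ∧ ¬ wcOf v = 0) ∧ wcOf v = 1} +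
        Nat.card {v // ((p v ∧ Touches v) ∧ ¬ wcOf v = 0) ∧ ¬ wcOf v = 1} := by
    rw [Nat.card_congr (splitP (fun v => (p v ∧ Touches v) ∧ ¬ wcOf v = 0)
      (fun v => wcOf v = 1)), Nat.card_sum]
  have k0 : Nat.card {v // (p v ∧ Touches v) ∧ wcOf v = 0} = Nat.card (WTc ℓ μ 0) := rfl
  have kA : Nat.card {v // p v ∧ ¬ Touches v} = Nat.card (WA ℓ μ) := rfl
  have h5 : Nat.card {v // ((p v ∧ Touches v) ∧ ¬ wcOf v = 0) ∧ wcOf v = 1} =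
      Nat.card (WTc ℓ μ 1) := by
    refine Nat.card_congr (Equiv.subtypeEquivRight ?_)
    intro v
    constructor
    · rintro ⟨⟨hx, _⟩, hy⟩; exact ⟨hx, hy⟩
    · rintro ⟨hx, hy⟩; exact ⟨⟨hx, by omega⟩, hy⟩
  have h6 : Nat.card {v // ((p v ∧ Touches v) ∧ ¬ wcOf v = 0) ∧ ¬ wcOf v = 1} =
      Nat.card (WTc ℓ μ 2) := by
    refine Nat.card_congr (Equiv.subtypeEquivRight ?_)
    intro v
    constructor
    · rintro ⟨⟨hx, h0⟩, h1'⟩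
      refine ⟨hx, ?_⟩
      rcases wcOf_cases v with h | h | h
      · exact absurd h h0
      · exact absurd h h1'
      · exact h
    · rintro ⟨hx, hy⟩; exact ⟨⟨hx, by omega⟩, by omega⟩
  omega

lemma main (i j r : ℤ) (h1 : j < i) (h2 : r < j) (h3 : 0 ≤ r) :
    aCount 4 ℓ ![i, j, r] + aCount 4 ℓ ![j, r, i] + aCount 4 ℓ ![r, i, j] =
      omegaCount 4 ℓ ![i, j, r] + aCount 4 ℓ ![j, i, r] + aCount 4 ℓ ![r, j, i]
        + aCount 4 ℓ ![i, r, j] := by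
  have d1 := card_split (ℓ := ℓ) ![i, j, r]
  have d2 := card_split (ℓ := ℓ) ![j, r, i]
  have d3 := card_split (ℓ := ℓ) ![r, i, j]
  have d4 := card_split (ℓ := ℓ) ![j, i, r]
  have d5 := card_split (ℓ := ℓ) ![r, j, i]
  have d6 := card_split (ℓ := ℓ) ![i, r, j]
  -- avoid parts
  have a1 : Nat.card (WA ℓ ![i, j, r]) = omegaCount 4 ℓ ![i, j, r] :=
    Nat.card_congr (avoidEquiv _)
  have a2 : Nat.card (WA ℓ ![j, r, i]) = 0 := by
    haveI := wa_isEmpty (ℓ := ℓ) (μ := ![j, r, i]) (by simp; omega)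
    exact Nat.card_of_isEmpty
  have a3 : Nat.card (WA ℓ ![r, i, j]) = 0 := by
    haveI := wa_isEmpty (ℓ := ℓ) (μ := ![r, i, j]) (by simp; omega)
    exact Nat.card_of_isEmpty
  have a4 : Nat.card (WA ℓ ![j, i, r]) = 0 := by
    haveI := wa_isEmpty (ℓ := ℓ) (μ := ![j, i, r]) (by simp; omega)
    exact Nat.card_of_isEmpty
  have a5 : Nat.card (WA ℓ ![r, j, i]) = 0 := by
    haveI := wa_isEmpty (ℓ := ℓ) (μ := ![r, j, i]) (by simp; omega)
    exact Nat.card_of_isEmpty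
  have a6 : Nat.card (WA ℓ ![i, r, j]) = 0 := by
    haveI := wa_isEmpty (ℓ := ℓ) (μ := ![i, r, j]) (by simp; omega)
    exact Nat.card_of_isEmpty
  -- reflection pairings
  have e1 : Nat.card (WTc ℓ ![i, j, r] 0) = Nat.card (WTc ℓ ![j, i, r] 0) :=
    Nat.card_congr (reflEquiv 0 _ _ (comp_swc0 i j r))
  have e2 : Nat.card (WTc ℓ ![i, j, r] 1) = Nat.card (WTc ℓ ![i, r, j] 1) :=
    Nat.card_congr (reflEquiv 1 _ _ (comp_swc1 i j r))
  have e3 : Nat.card (WTc ℓ ![i, j, r] 2) = Nat.card (WTc ℓ ![r, j, i] 2) :=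
    Nat.card_congr (reflEquiv 2 _ _ (comp_swc2 i j r))
  have e4 : Nat.card (WTc ℓ ![j, r, i] 0) = Nat.card (WTc ℓ ![r, j, i] 0) :=
    Nat.card_congr (reflEquiv 0 _ _ (comp_swc0 j r i))
  have e5 : Nat.card (WTc ℓ ![j, r, i] 1) = Nat.card (WTc ℓ ![j, i, r] 1) :=
    Nat.card_congr (reflEquiv 1 _ _ (comp_swc1 j r i))
  have e6 : Nat.card (WTc ℓ ![j, r, i] 2) = Nat.card (WTc ℓ ![i, r, j] 2) :=
    Nat.card_congr (reflEquiv 2 _ _ (comp_swc2 j r i))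
  have e7 : Nat.card (WTc ℓ ![r, i, j] 0) = Nat.card (WTc ℓ ![i, r, j] 0) :=
    Nat.card_congr (reflEquiv 0 _ _ (comp_swc0 r i j))
  have e8 : Nat.card (WTc ℓ ![r, i, j] 1) = Nat.card (WTc ℓ ![r, j, i] 1) :=
    Nat.card_congr (reflEquiv 1 _ _ (comp_swc1 r i j))
  have e9 : Nat.card (WTc ℓ ![r, i, j] 2) = Nat.card (WTc ℓ ![j, i, r] 2) :=
    Nat.card_congr (reflEquiv 2 _ _ (comp_swc2 r i j))
  omega

end OmegaProof

/-- for `k = 4` and `(i,j,r) ∈ W_3`,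
`ω^{(i,j,r)}_{4,ℓ} = a^{(i,j,r)} - a^{(j,i,r)} - a^{(r,j,i)} - a^{(i,r,j)}
 + a^{(j,r,i)} + a^{(r,i,j)}`. -/
theorem omega_four_reflection (ℓ : ℕ) (i j r : ℤ) (h1 : j < i) (h2 : r < j)
    (h3 : 0 ≤ r) :
    (omegaCount 4 ℓ ![i, j, r] : ℤ) =
      (aCount 4 ℓ ![i, j, r] : ℤ) - (aCount 4 ℓ ![j, i, r] : ℤ) -
        (aCount 4 ℓ ![r, j, i] : ℤ) - (aCount 4 ℓ ![i, r, j] : ℤ) +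
        (aCount 4 ℓ ![j, r, i] : ℤ) + (aCount 4 ℓ ![r, i, j] : ℤ) := by
  have h := OmegaProof.main (ℓ := ℓ) i j r h1 h2 h3
  omega
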